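/- Let T > 0, let A : [0,T] → ℝ^{n×n} be integrable, let X : [0,T] → ℝ^{n×n} be absolutely continuous with X'(t) = A_t X_t for almost every t ∈ [0,T], and let 1 ≤ k ≤ n. Then t ↦ ∧ᵏX_t is absolutely continuous and satisfies the compound ODE d/dt (∧ᵏX_t) = A_t^[k] · (∧ᵏX_t) for almost every t ∈ [0,T]. -/

import Mathlib

open MeasureTheory Matrix

/-- The `k`-th multiplicative compound of `X`: the matrix indexed by the
`k`-element subsets of `{1,…,n}` whose `(I,J)` entry is the `k×k` minor of `X`
with rows `I` and columns `J`. -/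
noncomputable def mulCompound {n : ℕ} (k : ℕ) (X : Matrix (Fin n) (Fin n) ℝ) :
    Matrix {s : Finset (Fin n) // s.card = k} {s : Finset (Fin n) // s.card = k} ℝ :=
  fun I J =>
    (X.submatrix (fun a : Fin k => (I.1.orderIsoOfFin I.2 a : Fin n))
      (fun a : Fin k => (J.1.orderIsoOfFin J.2 a : Fin n))).det

/-- The `k`-th additive compound of `A`: the entrywise derivative at `t = 0`
of `t ↦ ∧ᵏ(I + tA)`. -/
noncomputable def addCompound {n : ℕ} (k : ℕ) (A : Matrix (Fin n) (Fin n) ℝ) :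
    Matrix {s : Finset (Fin n) // s.card = k} {s : Finset (Fin n) // s.card = k} ℝ :=
  fun I J =>
    deriv (fun t : ℝ => mulCompound k ((1 : Matrix (Fin n) (Fin n) ℝ) + t • A) I J) 0

/-- The singular values of a real square matrix `M`: the square roots of the
eigenvalues of `MᵀM` (as an unordered family). -/
noncomputable def singularValues {m : Type*} [Fintype m] [DecidableEq m]
    (M : Matrix m m ℝ) : m → ℝ :=
  fun i => Real.sqrt (((by have h := Matrix.isHermitian_conjTranspose_mul_self M; rwa [Matrix.conjTranspose_eq_transpose_of_trivial] at h : (Mᵀ * M).IsHermitian)).eigenvalues i)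

/-- The operator (spectral) norm of a real square matrix, i.e. the norm of the
induced linear operator on Euclidean space. -/
noncomputable def opNorm {m : Type*} [Fintype m] [DecidableEq m]
    (M : Matrix m m ℝ) : ℝ :=
  ‖(Matrix.toEuclideanCLM (𝕜 := ℝ) M : EuclideanSpace ℝ m →L[ℝ] EuclideanSpace ℝ m)‖

/-- The entries of `v` sorted in decreasing order. -/
noncomputable def sortDesc {n : ℕ} (v : Fin n → ℝ) : Fin n → ℝ :=
  fun i => v (Tuple.sort v i.rev)
section AuxAnalysis
open Set

/-- Fubini-type symmetrized integration by parts for primitives. -/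
lemma fubini_parts {f g : ℝ → ℝ} {t : ℝ} (ht : 0 ≤ t)
    (hf : IntervalIntegrable f volume 0 t) (hg : IntervalIntegrable g volume 0 t) :
    (∫ s in (0:ℝ)..t, f s * ∫ r in (0:ℝ)..s, g r) +
      (∫ s in (0:ℝ)..t, g s * ∫ r in (0:ℝ)..s, f r) =
    (∫ s in (0:ℝ)..t, f s) * ∫ s in (0:ℝ)..t, g s := by
  set μ := volume.restrict (Set.Ioc (0:ℝ) t) with hμ
  have hfi : Integrable f μ := (intervalIntegrable_iff_integrableOn_Ioc_of_le ht).mp hf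
  have hgi : Integrable g μ := (intervalIntegrable_iff_integrableOn_Ioc_of_le ht).mp hg
  have hH : Integrable (fun z : ℝ × ℝ => f z.1 * g z.2) (μ.prod μ) := hfi.mul_prod hgi
  set Aset : Set (ℝ × ℝ) := {z | z.2 ≤ z.1} with hAset
  have hA : MeasurableSet Aset := measurableSet_le measurable_snd measurable_fst
  have split : (∫ z in Aset, f z.1 * g z.2 ∂μ.prod μ) +
      ∫ z in Asetᶜ, f z.1 * g z.2 ∂μ.prod μ = ∫ z, f z.1 * g z.2 ∂μ.prod μ :=
    integral_add_compl hA hH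
  have total : ∫ z, f z.1 * g z.2 ∂μ.prod μ = (∫ s, f s ∂μ) * ∫ s, g s ∂μ :=
    integral_prod_mul f g
  have e1 : (∫ z in Aset, f z.1 * g z.2 ∂μ.prod μ)
      = ∫ s in (0:ℝ)..t, f s * ∫ r in (0:ℝ)..s, g r := by
    rw [← integral_indicator hA, integral_prod _ (hH.indicator hA)]
    rw [intervalIntegral.integral_of_le ht]
    refine setIntegral_congr_fun measurableSet_Ioc (fun x hx => ?_)
    have : (fun y => Aset.indicator (fun z : ℝ × ℝ => f z.1 * g z.2) (x, y))
        = (Set.Iic x).indicator (fun y => f x * g y) := by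
      funext y; by_cases h : y ≤ x <;> simp [Set.indicator, hAset, h]
    rw [this, integral_indicator measurableSet_Iic, hμ, Measure.restrict_restrict measurableSet_Iic]
    have hxt : Set.Iic x ∩ Set.Ioc 0 t = Set.Ioc 0 x := by
      ext y; simp only [Set.mem_inter_iff, Set.mem_Iic, Set.mem_Ioc]
      exact ⟨fun h => ⟨h.2.1, h.1⟩, fun h => ⟨h.2, h.1, h.2.trans hx.2⟩⟩
    rw [hxt, intervalIntegral.integral_of_le hx.1.le, MeasureTheory.integral_const_mul]
  have e2 : (∫ z in Asetᶜ, f z.1 * g z.2 ∂μ.prod μ)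
      = ∫ s in (0:ℝ)..t, g s * ∫ r in (0:ℝ)..s, f r := by
    rw [← integral_indicator hA.compl, integral_prod_symm _ (hH.indicator hA.compl)]
    rw [intervalIntegral.integral_of_le ht]
    refine setIntegral_congr_fun measurableSet_Ioc (fun y hy => ?_)
    have : (fun x => Asetᶜ.indicator (fun z : ℝ × ℝ => f z.1 * g z.2) (x, y))
        = (Set.Iio y).indicator (fun x => f x * g y) := by
      funext x; by_cases h : x < y
      · simp [Set.indicator, hAset, h, not_le.mpr h]
      · simp [Set.indicator, hAset, h, not_lt.mp h]
    rw [this, integral_indicator measurableSet_Iio, hμ, Measure.restrict_restrict measurableSet_Iio]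
    have hxt : Set.Iio y ∩ Set.Ioc 0 t = Set.Ioo 0 y := by
      ext x; simp only [Set.mem_inter_iff, Set.mem_Iio, Set.mem_Ioo, Set.mem_Ioc]
      exact ⟨fun h => ⟨h.2.1, h.1⟩, fun h => ⟨h.2, h.1, h.2.le.trans hy.2⟩⟩
    rw [hxt, intervalIntegral.integral_of_le hy.1.le, ← integral_Ioc_eq_integral_Ioo,
      integral_mul_const]
    ring
  rw [e1, e2] at split
  rw [split, total, intervalIntegral.integral_of_le ht, intervalIntegral.integral_of_le ht]
open MeasureTheory Set

section NiceDef
variable (T : ℝ)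

/-- `f` is given in integral form on `[0,T]` with integrable density `f'`. -/
def NiceFn (f f' : ℝ → ℝ) : Prop :=
  IntervalIntegrable f' volume 0 T ∧ ∀ t ∈ Set.Icc (0:ℝ) T, f t = f 0 + ∫ s in (0:ℝ)..t, f' s

end NiceDef

variable {T : ℝ}

lemma NiceFn.congr_density {f f' g' : ℝ → ℝ} (h : NiceFn T f f') (hg : ∀ t, f' t = g' t) :
    NiceFn T f g' := by
  have : f' = g' := funext hg
  rwa [← this]

lemma niceFn_const (c : ℝ) : NiceFn T (fun _ => c) (fun _ => 0) := by
  refine ⟨intervalIntegrable_const, fun t _ => by simp⟩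

lemma NiceFn.add {f f' g g' : ℝ → ℝ} (hf : NiceFn T f f') (hg : NiceFn T g g') :
    NiceFn T (fun t => f t + g t) (fun t => f' t + g' t) := by
  refine ⟨hf.1.add hg.1, fun t ht => ?_⟩
  rw [intervalIntegral.integral_add (hf.1.mono_set ?_) (hg.1.mono_set ?_)]
  · have := hf.2 t ht; have := hg.2 t ht; ring_nf; linarith
  all_goals
    exact Set.uIcc_subset_uIcc left_mem_uIcc (by rw [Set.uIcc_of_le (ht.1.trans ht.2)]; exact ht)

lemma NiceFn.const_mul {f f' : ℝ → ℝ} (c : ℝ) (hf : NiceFn T f f') :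
    NiceFn T (fun t => c * f t) (fun t => c * f' t) := by
  refine ⟨hf.1.const_mul c, fun t ht => ?_⟩
  simp only [intervalIntegral.integral_const_mul]; rw [hf.2 t ht]; ring

lemma NiceFn.sum {ι : Type*} (s : Finset ι) {f f' : ι → ℝ → ℝ}
    (h : ∀ i ∈ s, NiceFn T (f i) (f' i)) :
    NiceFn T (fun t => ∑ i ∈ s, f i t) (fun t => ∑ i ∈ s, f' i t) := by
  classical
  induction s using Finset.induction_on with
  | empty => simpa using niceFn_const 0
  | insert a s hns ih =>
    simp only [Finset.sum_insert hns]
    exact (h a (Finset.mem_insert_self a s)).add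
      (ih fun i hi => h i (Finset.mem_insert_of_mem hi))

lemma NiceFn.continuousOn (hT : 0 ≤ T) {f f' : ℝ → ℝ} (hf : NiceFn T f f') :
    ContinuousOn f (Set.Icc 0 T) := by
  have h1 : ContinuousOn (fun t => f 0 + ∫ s in (0:ℝ)..t, f' s) (Set.Icc 0 T) := by
    apply continuousOn_const.add
    have := intervalIntegral.continuousOn_primitive_interval' hf.1 left_mem_uIcc
    rwa [Set.uIcc_of_le hT] at this
  exact h1.congr (fun t ht => hf.2 t ht)



lemma NiceFn.mul (hT : 0 ≤ T) {u u' v v' : ℝ → ℝ}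
    (hu : NiceFn T u u') (hv : NiceFn T v v') :
    NiceFn T (fun t => u t * v t) (fun t => u' t * v t + u t * v' t) := by
  have hTIcc : Set.uIcc (0:ℝ) T = Set.Icc 0 T := Set.uIcc_of_le hT
  have hucont : ContinuousOn u (Set.uIcc (0:ℝ) T) := hTIcc ▸ hu.continuousOn hT
  have hvcont : ContinuousOn v (Set.uIcc (0:ℝ) T) := hTIcc ▸ hv.continuousOn hT
  constructor
  · exact (hu.1.mul_continuousOn hvcont).add (hv.1.continuousOn_mul hucont)
  intro t ht
  have hsub : Set.uIcc (0:ℝ) t ⊆ Set.uIcc (0:ℝ) T :=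
    Set.uIcc_subset_uIcc left_mem_uIcc (by rw [hTIcc]; exact ht)
  have hu't : IntervalIntegrable u' volume 0 t := hu.1.mono_set hsub
  have hv't : IntervalIntegrable v' volume 0 t := hv.1.mono_set hsub
  have hVcont : ContinuousOn (fun s => ∫ r in (0:ℝ)..s, v' r) (Set.uIcc (0:ℝ) t) :=
    (intervalIntegral.continuousOn_primitive_interval' hv.1 left_mem_uIcc).mono hsub
  have hUcont : ContinuousOn (fun s => ∫ r in (0:ℝ)..s, u' r) (Set.uIcc (0:ℝ) t) :=
    (intervalIntegral.continuousOn_primitive_interval' hu.1 left_mem_uIcc).mono hsub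
  have hIccsub : Set.Icc (0:ℝ) t ⊆ Set.Icc 0 T := Set.Icc_subset_Icc le_rfl ht.2
  have huIcct : Set.uIcc (0:ℝ) t = Set.Icc 0 t := Set.uIcc_of_le ht.1
  -- rewrite the integrand using the integral representations of u and v
  have key : ∫ s in (0:ℝ)..t, (u' s * v s + u s * v' s)
      = ∫ s in (0:ℝ)..t, (u' s * v 0 + u' s * (∫ r in (0:ℝ)..s, v' r)
          + (v' s * u 0 + v' s * (∫ r in (0:ℝ)..s, u' r))) := by
    apply intervalIntegral.integral_congr
    intro s hs
    have hs' : s ∈ Set.Icc (0:ℝ) T := hIccsub (huIcct ▸ hs)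
    show u' s * v s + u s * v' s = _
    rw [hu.2 s hs', hv.2 s hs']; ring
  rw [key]
  have i1 : IntervalIntegrable (fun s => u' s * v 0) volume 0 t := hu't.mul_const _
  have i2 : IntervalIntegrable (fun s => u' s * ∫ r in (0:ℝ)..s, v' r) volume 0 t :=
    hu't.mul_continuousOn hVcont
  have i3 : IntervalIntegrable (fun s => v' s * u 0) volume 0 t := hv't.mul_const _
  have i4 : IntervalIntegrable (fun s => v' s * ∫ r in (0:ℝ)..s, u' r) volume 0 t :=
    hv't.mul_continuousOn hUcont
  rw [intervalIntegral.integral_add (i1.add i2) (i3.add i4),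
    intervalIntegral.integral_add i1 i2, intervalIntegral.integral_add i3 i4,
    intervalIntegral.integral_mul_const, intervalIntegral.integral_mul_const]
  have hfub := fubini_parts ht.1 hu't hv't
  have hut := hu.2 t ht
  have hvt := hv.2 t ht
  show u t * v t = u 0 * v 0 + _
  rw [hut, hvt]
  linear_combination -hfub

lemma niceFn_prod (hT : 0 ≤ T) {ι : Type*} [DecidableEq ι] (s : Finset ι) (f f' : ι → ℝ → ℝ)
    (h : ∀ i ∈ s, NiceFn T (f i) (f' i)) :
    NiceFn T (fun t => ∏ i ∈ s, f i t)
      (fun t => ∑ r ∈ s, f' r t * ∏ i ∈ s.erase r, f i t) := by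
  induction s using Finset.induction_on with
  | empty => simpa using niceFn_const 1
  | insert a s hns ih =>
    have ha : NiceFn T (f a) (f' a) := h a (Finset.mem_insert_self a s)
    have hs := ih fun i hi => h i (Finset.mem_insert_of_mem hi)
    have := (NiceFn.mul hT ha hs)
    simp only [Finset.prod_insert hns]
    refine this.congr_density fun t => ?_
    rw [Finset.sum_insert hns, Finset.erase_insert hns]
    congr 1
    rw [Finset.mul_sum]
    refine Finset.sum_congr rfl fun r hr => ?_
    have hne : a ≠ r := fun hh => hns (hh ▸ hr)
    have he : (insert a s).erase r = insert a (s.erase r) := Finset.erase_insert_of_ne hne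
    rw [he, Finset.prod_insert (fun hh => hns (Finset.mem_of_mem_erase hh))]
    ring

end AuxAnalysis

section AuxAlgebra
variable {n k : ℕ}


noncomputable def kiso (K : {s : Finset (Fin n) // s.card = k}) : Fin k → Fin n :=
  fun a => (K.1.orderIsoOfFin K.2 a : Fin n)

lemma kiso_injective (K : {s : Finset (Fin n) // s.card = k}) : Function.Injective (kiso K) :=
  fun _ _ hab => (K.1.orderIsoOfFin K.2).injective (Subtype.ext hab)

lemma kiso_mem (K : {s : Finset (Fin n) // s.card = k}) (a : Fin k) : kiso K a ∈ K.1 :=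
  (K.1.orderIsoOfFin K.2 a).2

lemma image_kiso (K : {s : Finset (Fin n) // s.card = k}) :
    Finset.image (kiso K) Finset.univ = K.1 := by
  ext x
  simp only [Finset.mem_image, Finset.mem_univ, true_and]
  constructor
  · rintro ⟨a, rfl⟩; exact kiso_mem K a
  · intro hx
    exact ⟨(K.1.orderIsoOfFin K.2).symm ⟨x, hx⟩, by simp [kiso]⟩

lemma det_col (P : Matrix (Fin k) (Fin k) ℝ) :
    P.det = ∑ σ : Equiv.Perm (Fin k), ((Equiv.Perm.sign σ : ℤ) : ℝ) * ∏ i, P i (σ i) := by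
  rw [← Matrix.det_transpose, Matrix.det_apply']
  simp [Matrix.transpose_apply]

noncomputable def injDecompK (φ : Fin k → Fin n) (hφ : Function.Injective φ) :
    {s : Finset (Fin n) // s.card = k} :=
  ⟨Finset.image φ Finset.univ, by
    rw [Finset.card_image_of_injective _ hφ, Finset.card_univ, Fintype.card_fin]⟩

noncomputable def injDecompE (φ : Fin k → Fin n) (hφ : Function.Injective φ) :
    Equiv.Perm (Fin k) :=
  Equiv.ofBijective
    (fun i => ((injDecompK φ hφ).1.orderIsoOfFin (injDecompK φ hφ).2).symm
      ⟨φ i, Finset.mem_image_of_mem φ (Finset.mem_univ i)⟩)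
    (by
      rw [← Finite.injective_iff_bijective]
      intro a b hab
      exact hφ (congrArg Subtype.val ((OrderIso.symm _).injective hab)))

lemma injDecomp_spec (φ : Fin k → Fin n) (hφ : Function.Injective φ) (i : Fin k) :
    kiso (injDecompK φ hφ) (injDecompE φ hφ i) = φ i := by
  simp [kiso, injDecompE]

theorem cauchyBinet (M N : Matrix (Fin n) (Fin n) ℝ) (f g : Fin k → Fin n) :
    ((M * N).submatrix f g).det
      = ∑ K : {s : Finset (Fin n) // s.card = k},
          (M.submatrix f (kiso K)).det * (N.submatrix (kiso K) g).det := by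
  classical
  have step1 : ((M * N).submatrix f g).det
      = ∑ φ : Fin k → Fin n, (∏ i, M (f i) (φ i)) * (N.submatrix φ g).det := by
    have hrow : (M * N).submatrix f g
        = Matrix.of fun i => ∑ l : Fin n, M (f i) l • fun j => N l (g j) := by
      ext i j
      simp [Matrix.mul_apply, Finset.sum_apply]
    rw [hrow]
    calc Matrix.det (Matrix.of fun i => ∑ l : Fin n, M (f i) l • fun j => N l (g j))
        = ∑ φ : Fin k → Fin n,
            Matrix.detRowAlternating (fun i => M (f i) (φ i) • fun j => N (φ i) (g j)) := by
          exact Matrix.detRowAlternating.toMultilinearMap.map_sum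
            (g := fun i l => M (f i) l • fun j => N l (g j))
      _ = ∑ φ : Fin k → Fin n, (∏ i, M (f i) (φ i)) * (N.submatrix φ g).det := by
          refine Finset.sum_congr rfl fun φ _ => ?_
          have h2 := Matrix.detRowAlternating.toMultilinearMap.map_smul_univ
            (fun i => M (f i) (φ i)) (fun i => fun j => N (φ i) (g j))
          rw [AlternatingMap.coe_multilinearMap] at h2
          rw [h2]
          rfl
  rw [step1]
  rw [← Finset.sum_filter_of_ne
    (p := fun φ : Fin k → Fin n => Function.Injective φ)
    (fun φ _ hφ => by
      by_contra hinj
      apply hφ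
      obtain ⟨a, b, hab, hne⟩ : ∃ a b, φ a = φ b ∧ a ≠ b := by
        simp only [Function.Injective, not_forall] at hinj
        obtain ⟨a, b, h1, h2⟩ := hinj; exact ⟨a, b, h1, h2⟩
      rw [Matrix.det_zero_of_row_eq hne (by ext j; simp [hab]), mul_zero])]
  have step2 : ∑ φ ∈ Finset.filter (fun φ : Fin k → Fin n => Function.Injective φ) Finset.univ,
        (∏ i, M (f i) (φ i)) * (N.submatrix φ g).det
      = ∑ Kσ : {s : Finset (Fin n) // s.card = k} × Equiv.Perm (Fin k),
          ((Equiv.Perm.sign Kσ.2 : ℤ) : ℝ) * (∏ i, M (f i) (kiso Kσ.1 (Kσ.2 i)))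
            * (N.submatrix (kiso Kσ.1) g).det := by
    refine Finset.sum_bij'
      (fun φ hφ => (injDecompK φ (Finset.mem_filter.mp hφ).2,
        injDecompE φ (Finset.mem_filter.mp hφ).2))
      (fun Kσ _ => kiso Kσ.1 ∘ Kσ.2)
      (fun φ hφ => Finset.mem_univ _)
      (fun Kσ _ => Finset.mem_filter.mpr
        ⟨Finset.mem_univ _, (kiso_injective Kσ.1).comp Kσ.2.injective⟩)
      (fun φ hφ => funext fun i => injDecomp_spec φ (Finset.mem_filter.mp hφ).2 i)
      ?_ ?_
    · -- right inverse
      rintro ⟨K, σ⟩ -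
      have hinj : Function.Injective (kiso K ∘ σ) := (kiso_injective K).comp σ.injective
      have hK : injDecompK (kiso K ∘ σ) hinj = K := by
        apply Subtype.ext
        show Finset.image (kiso K ∘ σ) Finset.univ = K.1
        rw [← Finset.image_image, Finset.image_univ_equiv, image_kiso]
      refine Prod.ext hK (Equiv.ext fun i => ?_)
      have hspec := injDecomp_spec (kiso K ∘ σ) hinj i
      rw [hK] at hspec
      exact kiso_injective K hspec
    · -- values match
      intro φ hφ
      have hinj := (Finset.mem_filter.mp hφ).2
      have hφeq : φ = kiso (injDecompK φ hinj) ∘ (injDecompE φ hinj) :=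
        funext fun i => (injDecomp_spec φ hinj i).symm
      have hsub : N.submatrix φ g
          = (N.submatrix (kiso (injDecompK φ hinj)) g).submatrix (injDecompE φ hinj) id := by
        ext i j
        simp [injDecomp_spec]
      rw [hsub, Matrix.det_permute]
      have hprod : (∏ i, M (f i) (φ i))
          = ∏ i, M (f i) (kiso (injDecompK φ hinj) (injDecompE φ hinj i)) :=
        Finset.prod_congr rfl fun i _ => by rw [injDecomp_spec]
      rw [hprod]
      push_cast
      try ring
  rw [step2, Fintype.sum_prod_type]
  refine Finset.sum_congr rfl fun K _ => ?_
  rw [det_col (M.submatrix f (kiso K)), Finset.sum_mul]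
  refine Finset.sum_congr rfl fun σ _ => ?_
  simp only [Matrix.submatrix_apply]
  try ring

lemma mulCompound_eq (X : Matrix (Fin n) (Fin n) ℝ) (I J : {s : Finset (Fin n) // s.card = k}) :
    mulCompound k X I J = ((X.submatrix (kiso I) (kiso J)).det) := rfl

/-- normal form for the derivative of a determinant -/
noncomputable def detDeriv (P P' : Matrix (Fin k) (Fin k) ℝ) : ℝ :=
  ∑ σ : Equiv.Perm (Fin k), ((Equiv.Perm.sign σ : ℤ) : ℝ) *
    ∑ r, P' r (σ r) * ∏ i ∈ Finset.univ.erase r, P i (σ i)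

lemma hasDerivAt_det (m : ℝ → Matrix (Fin k) (Fin k) ℝ) (m' : Matrix (Fin k) (Fin k) ℝ)
    (t₀ : ℝ) (h : ∀ i j, HasDerivAt (fun t => m t i j) (m' i j) t₀) :
    HasDerivAt (fun t => (m t).det) (detDeriv (m t₀) m') t₀ := by
  simp only [det_col]
  have : ∀ σ : Equiv.Perm (Fin k), HasDerivAt (fun t => ∏ i, m t i (σ i))
      (∑ r, m' r (σ r) * ∏ i ∈ Finset.univ.erase r, m t₀ i (σ i)) t₀ := by
    intro σ
    have hp := HasDerivAt.fun_finsetProd (u := Finset.univ)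
      (f := fun i t => m t i (σ i)) (f' := fun i => m' i (σ i)) (x := t₀)
      (fun i _ => h i (σ i))
    refine hp.congr_deriv ?_
    refine Finset.sum_congr rfl fun r _ => ?_
    rw [smul_eq_mul, mul_comm]
  exact HasDerivAt.fun_sum fun σ _ => ((this σ).const_mul _)

lemma entry_der (C D : Matrix (Fin n) (Fin n) ℝ) (I J : {s : Finset (Fin n) // s.card = k})
    (i j : Fin k) :
    HasDerivAt (fun t : ℝ => ((C + t • D).submatrix (kiso I) (kiso J)) i j)
      ((D.submatrix (kiso I) (kiso J)) i j) 0 := by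
  have : (fun t : ℝ => ((C + t • D).submatrix (kiso I) (kiso J)) i j)
      = fun t : ℝ => C (kiso I i) (kiso J j) + t * D (kiso I i) (kiso J j) := by
    funext t; simp [Matrix.submatrix_apply, Matrix.add_apply, Matrix.smul_apply, smul_eq_mul]
  rw [this]
  simpa using ((hasDerivAt_id (0:ℝ)).mul_const (D (kiso I i) (kiso J j))).const_add
    (C (kiso I i) (kiso J j))

lemma addCompound_eq (A : Matrix (Fin n) (Fin n) ℝ) (I J : {s : Finset (Fin n) // s.card = k}) :
    addCompound k A I J
      = detDeriv ((1 : Matrix (Fin n) (Fin n) ℝ).submatrix (kiso I) (kiso J))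
          (A.submatrix (kiso I) (kiso J)) := by
  have hder : HasDerivAt (fun t : ℝ => mulCompound k (1 + t • A) I J)
      (detDeriv ((1 : Matrix (Fin n) (Fin n) ℝ).submatrix (kiso I) (kiso J))
        (A.submatrix (kiso I) (kiso J))) 0 := by
    have := hasDerivAt_det
      (fun t => ((1 : Matrix (Fin n) (Fin n) ℝ) + t • A).submatrix (kiso I) (kiso J))
      (A.submatrix (kiso I) (kiso J)) 0 (entry_der 1 A I J)
    simpa [mulCompound_eq] using this
  rw [addCompound]
  exact hder.deriv

lemma star_identity (A X : Matrix (Fin n) (Fin n) ℝ) (I J : {s : Finset (Fin n) // s.card = k}) :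
    detDeriv (X.submatrix (kiso I) (kiso J)) ((A * X).submatrix (kiso I) (kiso J))
      = ∑ K : {s : Finset (Fin n) // s.card = k},
          addCompound k A I K * mulCompound k X K J := by
  -- left side
  have hL : HasDerivAt (fun t : ℝ => ((X + t • (A * X)).submatrix (kiso I) (kiso J)).det)
      (detDeriv (X.submatrix (kiso I) (kiso J)) ((A * X).submatrix (kiso I) (kiso J))) 0 := by
    have := hasDerivAt_det (fun t => (X + t • (A * X)).submatrix (kiso I) (kiso J))
      ((A * X).submatrix (kiso I) (kiso J)) 0 (entry_der X (A * X) I J)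
    simpa using this
  -- right side
  have hR : HasDerivAt
      (fun t : ℝ => ∑ K : {s : Finset (Fin n) // s.card = k},
        (((1 : Matrix (Fin n) (Fin n) ℝ) + t • A).submatrix (kiso I) (kiso K)).det
          * (X.submatrix (kiso K) (kiso J)).det)
      (∑ K : {s : Finset (Fin n) // s.card = k},
        detDeriv ((1 : Matrix (Fin n) (Fin n) ℝ).submatrix (kiso I) (kiso K))
            (A.submatrix (kiso I) (kiso K)) * (X.submatrix (kiso K) (kiso J)).det) 0 := by
    refine HasDerivAt.fun_sum fun K _ => ?_
    have := hasDerivAt_det (fun t => ((1 : Matrix (Fin n) (Fin n) ℝ) + t • A).submatrix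
      (kiso I) (kiso K)) (A.submatrix (kiso I) (kiso K)) 0 (entry_der 1 A I K)
    simpa using this.mul_const ((X.submatrix (kiso K) (kiso J)).det)
  -- the two functions agree
  have hfun : (fun t : ℝ => ((X + t • (A * X)).submatrix (kiso I) (kiso J)).det)
      = (fun t : ℝ => ∑ K : {s : Finset (Fin n) // s.card = k},
        (((1 : Matrix (Fin n) (Fin n) ℝ) + t • A).submatrix (kiso I) (kiso K)).det
          * (X.submatrix (kiso K) (kiso J)).det) := by
    funext t
    have hXt : X + t • (A * X) = ((1 : Matrix (Fin n) (Fin n) ℝ) + t • A) * X := by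
      rw [add_mul, one_mul, Matrix.smul_mul]
    rw [hXt, cauchyBinet]
  rw [hfun] at hL
  have := hL.unique hR
  rw [this]
  refine Finset.sum_congr rfl fun K _ => ?_
  rw [addCompound_eq, mulCompound_eq]

end AuxAlgebra


/-- Lemma 11, the compound ODE. If `X` is an absolutely
continuous solution of `X' = A_t X` a.e. on `[0,T]` (encoded in integral form,
with integrable right-hand side), then `∧ᵏX_t` is absolutely continuous and
solves `d/dt (∧ᵏX_t) = A_t^[k] (∧ᵏX_t)` a.e. (again encoded in integral form,
with integrable right-hand side). -/
theorem mulCompound_ode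
    {n k : ℕ} (hk1 : 1 ≤ k) (hkn : k ≤ n) (T : ℝ) (hT : 0 < T)
    (A X : ℝ → Matrix (Fin n) (Fin n) ℝ)
    (hAint : ∀ i j, IntervalIntegrable (fun t => A t i j) MeasureTheory.volume 0 T)
    (hprod : ∀ i j,
      IntervalIntegrable (fun t => (A t * X t) i j) MeasureTheory.volume 0 T)
    (hX : ∀ t ∈ Set.Icc (0:ℝ) T, ∀ i j,
      X t i j = X 0 i j + ∫ s in (0:ℝ)..t, (A s * X s) i j) :
    (∀ I J : {s : Finset (Fin n) // s.card = k},
      IntervalIntegrable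
        (fun t => (addCompound k (A t) * mulCompound k (X t)) I J)
        MeasureTheory.volume 0 T) ∧
    (∀ t ∈ Set.Icc (0:ℝ) T, ∀ I J : {s : Finset (Fin n) // s.card = k},
      mulCompound k (X t) I J = mulCompound k (X 0) I J +
        ∫ s in (0:ℝ)..t, (addCompound k (A s) * mulCompound k (X s)) I J) := by
  classical
  have hT0 : (0:ℝ) ≤ T := hT.le
  have key : ∀ I J : {s : Finset (Fin n) // s.card = k},
      NiceFn T (fun t => mulCompound k (X t) I J)
        (fun t => (addCompound k (A t) * mulCompound k (X t)) I J) := by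
    intro I J
    have hentry : ∀ a b : Fin n, NiceFn T (fun t => X t a b) (fun t => (A t * X t) a b) :=
      fun a b => ⟨hprod a b, fun t ht => hX t ht a b⟩
    have hσ : ∀ σ : Equiv.Perm (Fin k),
        NiceFn T
          (fun t => ((Equiv.Perm.sign σ : ℤ) : ℝ) * ∏ i, X t (kiso I i) (kiso J (σ i)))
          (fun t => ((Equiv.Perm.sign σ : ℤ) : ℝ) *
            ∑ r, (A t * X t) (kiso I r) (kiso J (σ r)) *
              ∏ i ∈ Finset.univ.erase r, X t (kiso I i) (kiso J (σ i))) := by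
      intro σ
      exact (niceFn_prod hT0 Finset.univ (fun i t => X t (kiso I i) (kiso J (σ i)))
        (fun i t => (A t * X t) (kiso I i) (kiso J (σ i)))
        (fun i _ => hentry _ _)).const_mul _
    have hsum := NiceFn.sum (T := T) Finset.univ
      (f := fun (σ : Equiv.Perm (Fin k)) t =>
        ((Equiv.Perm.sign σ : ℤ) : ℝ) * ∏ i, X t (kiso I i) (kiso J (σ i)))
      (f' := fun (σ : Equiv.Perm (Fin k)) t =>
        ((Equiv.Perm.sign σ : ℤ) : ℝ) *
          ∑ r, (A t * X t) (kiso I r) (kiso J (σ r)) *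
            ∏ i ∈ Finset.univ.erase r, X t (kiso I i) (kiso J (σ i)))
      (fun σ _ => hσ σ)
    have hGg : (fun t => ∑ σ : Equiv.Perm (Fin k),
        ((Equiv.Perm.sign σ : ℤ) : ℝ) * ∏ i, X t (kiso I i) (kiso J (σ i)))
        = fun t => mulCompound k (X t) I J := by
      funext t
      rw [mulCompound_eq, det_col]
      refine Finset.sum_congr rfl fun σ _ => ?_
      simp [Matrix.submatrix_apply]
    rw [hGg] at hsum
    refine hsum.congr_density fun t => ?_
    have h1 : (∑ σ : Equiv.Perm (Fin k),
        ((Equiv.Perm.sign σ : ℤ) : ℝ) *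
          ∑ r, (A t * X t) (kiso I r) (kiso J (σ r)) *
            ∏ i ∈ Finset.univ.erase r, X t (kiso I i) (kiso J (σ i)))
        = detDeriv ((X t).submatrix (kiso I) (kiso J))
            (((A t) * (X t)).submatrix (kiso I) (kiso J)) := by
      rw [detDeriv]
      refine Finset.sum_congr rfl fun σ _ => ?_
      simp [Matrix.submatrix_apply]
    rw [h1, star_identity, Matrix.mul_apply]
  exact ⟨fun I J => (key I J).1, fun t ht I J => (key I J).2 t ht⟩
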